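/- Let λ > 0 and n be real numbers, and let a, v be real numbers with v > 0, a > 0, and |v^λ − a| < v^λ. Then a^{n/λ} = ∑_{k=0}^∞ (−1)ᵏ · C(n/λ, k) · v^{n − kλ} · (v^λ − a)ᵏ; equivalently, a^{n/λ} = vⁿ − (n/λ)v^{n−λ}(v^λ−a) + (n/λ)((n−λ)/2λ)v^{n−2λ}(v^λ−a)² − (n/λ)((n−λ)/2λ)((n−2λ)/3λ)v^{n−3λ}(v^λ−a)³ + ⋯. -/

import Mathlib

/-- Generalized binomial coefficient `C(r, k) = (∏_{j=0}^{k-1} (r - j)) / k!`. -/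
noncomputable def genBinom (r : ℝ) (k : ℕ) : ℝ :=
  (∏ j ∈ Finset.range k, (r - j)) / (Nat.factorial k : ℝ)

open Finset Nat

lemma genBinom_zero (r : ℝ) : genBinom r 0 = 1 := by simp [genBinom]

lemma genBinom_succ (r : ℝ) (k : ℕ) :
    genBinom r (k + 1) = genBinom r k * (r - k) / (k + 1) := by
  have h1 : (k ! : ℝ) ≠ 0 := Nat.cast_ne_zero.2 k.factorial_ne_zero
  have h2 : ((k : ℝ) + 1) ≠ 0 := by positivity
  simp only [genBinom, Finset.prod_range_succ, Nat.factorial_succ, Nat.cast_mul, Nat.cast_add,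
    Nat.cast_one]
  rw [div_mul_eq_mul_div, div_div]
  rw [mul_comm ((k:ℝ) + 1)]

lemma genBinom_ratio (r : ℝ) (k : ℕ) :
    ((k : ℝ) + 1) * genBinom r (k + 1) = (r - k) * genBinom r k := by
  have h2 : ((k : ℝ) + 1) ≠ 0 := by positivity
  rw [genBinom_succ]
  field_simp

lemma prod_asc (m k : ℕ) :
    (∏ j ∈ Finset.range k, ((m : ℝ) + 1 + j)) = ((m + 1).ascFactorial k : ℝ) := by
  induction k with
  | zero => simp
  | succ n ih => rw [Finset.prod_range_succ, ih, Nat.ascFactorial_succ]; push_cast; ring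

lemma abs_genBinom_le (r : ℝ) (m k : ℕ) (hm : |r| ≤ m) :
    |genBinom r k| ≤ ((m + k).choose m : ℝ) := by
  have hfac : (0 : ℝ) < (k ! : ℝ) := by exact_mod_cast k.factorial_pos
  have h1 : |genBinom r k| = (∏ j ∈ Finset.range k, |r - j|) / (k ! : ℝ) := by
    rw [genBinom, abs_div, Finset.abs_prod, abs_of_pos hfac]
  rw [h1]
  have h2 : (∏ j ∈ Finset.range k, |r - j|) ≤ ∏ j ∈ Finset.range k, ((m : ℝ) + 1 + j) := by
    refine Finset.prod_le_prod (fun j _ => abs_nonneg _) (fun j _ => ?_)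
    calc |r - j| ≤ |r| + j := by
          calc |r - (j:ℝ)| ≤ |r| + |(j:ℝ)| := abs_sub _ _
          _ = |r| + j := by rw [abs_of_nonneg (by positivity : (0:ℝ) ≤ (j:ℝ))]
      _ ≤ (m : ℝ) + 1 + j := by linarith
  have h3 : ((m + 1).ascFactorial k : ℝ) = (k ! : ℝ) * ((m + k).choose k : ℝ) := by
    rw [Nat.ascFactorial_eq_factorial_mul_choose]; push_cast; ring
  have h4 : (m + k).choose k = (m + k).choose m := by
    rw [← Nat.choose_symm (Nat.le_add_left k m)]
    congr 1
    omega
  rw [div_le_iff₀ hfac]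
  calc (∏ j ∈ Finset.range k, |r - j|) ≤ ((m + 1).ascFactorial k : ℝ) := by
        rw [← prod_asc]; exact h2
    _ = ((m + k).choose m : ℝ) * (k ! : ℝ) := by rw [h3, h4]; ring

set_option maxHeartbeats 1000000 in
lemma summable_master (m : ℕ) {ρ : ℝ} (h0 : 0 ≤ ρ) (h1 : ρ < 1) :
    Summable (fun k : ℕ => ((k : ℝ) + 1) * ((m + k).choose m : ℝ) * ρ ^ k) := by
  have key : Summable (fun k : ℕ => ((k : ℝ) + 1) ^ (m + 1) * ρ ^ k) := by
    rcases eq_or_lt_of_le h0 with h | h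
    · apply summable_of_ne_finset_zero (s := {0})
      intro k hk
      have hk' : k ≠ 0 := by simpa using hk
      rw [← h, zero_pow hk', mul_zero]
    · have hρ : ‖ρ‖ < 1 := by rw [Real.norm_eq_abs, abs_of_pos h]; exact h1
      have h2 : Summable (fun n : ℕ => (n : ℝ) ^ (m + 1) * ρ ^ n) :=
        summable_pow_mul_geometric_of_norm_lt_one (m + 1) hρ
      have h3 : Summable (fun n : ℕ => ((n + 1 : ℕ) : ℝ) ^ (m + 1) * ρ ^ (n + 1)) :=
        (summable_nat_add_iff 1).2 h2
      have h4 := h3.mul_left ρ⁻¹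
      refine h4.congr (fun n => ?_)
      push_cast
      rw [pow_succ]
      field_simp
      ring
  refine (key.mul_left (((m : ℝ) + 1) ^ m)).of_nonneg_of_le (fun k => by positivity)
    (fun k => ?_)
  have hb : ((m + k).choose m : ℝ) ≤ ((m : ℝ) + 1) ^ m * ((k : ℝ) + 1) ^ m := by
    have hmk : ((m + k : ℕ) : ℝ) = (m : ℝ) + (k : ℝ) := by push_cast; ring
    have hb0 : (m : ℝ) + (k : ℝ) ≤ ((m : ℝ) + 1) * ((k : ℝ) + 1) := by
      nlinarith [Nat.cast_nonneg (α := ℝ) m, Nat.cast_nonneg (α := ℝ) k]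
    calc ((m + k).choose m : ℝ) ≤ ((m + k : ℕ) : ℝ) ^ m := by
          exact_mod_cast Nat.choose_le_pow (m + k) m
      _ = ((m : ℝ) + (k : ℝ)) ^ m := by rw [hmk]
      _ ≤ (((m : ℝ) + 1) * ((k : ℝ) + 1)) ^ m :=
          pow_le_pow_left₀ (by positivity) hb0 m
      _ = ((m : ℝ) + 1) ^ m * ((k : ℝ) + 1) ^ m := mul_pow _ _ _
  calc ((k : ℝ) + 1) * ((m + k).choose m : ℝ) * ρ ^ k
      ≤ ((k : ℝ) + 1) * (((m : ℝ) + 1) ^ m * ((k : ℝ) + 1) ^ m) * ρ ^ k := by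
        gcongr
    _ = ((m : ℝ) + 1) ^ m * (((k : ℝ) + 1) ^ (m + 1) * ρ ^ k) := by rw [pow_succ]; ring

set_option maxHeartbeats 1000000 in
lemma hasSum_one_add_rpow (r : ℝ) {x : ℝ} (hx : |x| < 1) :
    HasSum (fun k : ℕ => genBinom r k * x ^ k) ((1 + x) ^ r) := by
  obtain ⟨m, hm⟩ := exists_nat_ge |r|
  set c : ℕ → ℝ := genBinom r with hc
  have habs : ∀ k, |c k| ≤ ((m + k).choose m : ℝ) := fun k => abs_genBinom_le r m k hm
  -- summability of the main series
  have hsum : ∀ y : ℝ, |y| < 1 → Summable fun k : ℕ => c k * y ^ k := by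
    intro y hy
    refine Summable.of_norm_bounded (summable_master m (abs_nonneg y) hy) fun k => ?_
    rw [norm_mul, norm_pow, Real.norm_eq_abs, Real.norm_eq_abs]
    have h1 := habs k
    have h2 : (0:ℝ) ≤ |y| ^ k := by positivity
    have h3 : |c k| * |y| ^ k ≤ ((m + k).choose m : ℝ) * |y| ^ k :=
      mul_le_mul_of_nonneg_right h1 h2
    have h4 : (0:ℝ) ≤ ((m + k).choose m : ℝ) * |y| ^ k := by positivity
    nlinarith [mul_nonneg (Nat.cast_nonneg (α := ℝ) k) h4]
  -- bound for the derivative series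
  have hbound : ∀ (ρ : ℝ), 1/2 ≤ ρ → ∀ (y : ℝ), |y| ≤ ρ → ∀ k : ℕ,
      ‖c k * ((k : ℝ) * y ^ (k - 1))‖ ≤
        2 * (((k : ℝ) + 1) * ((m + k).choose m : ℝ) * ρ ^ k) := by
    intro ρ hρ y hy k
    have hρ0 : (0:ℝ) ≤ ρ := by linarith
    match k with
    | 0 => simp
    | (n+1) =>
      have hyρ : |y| ^ n ≤ ρ ^ n := pow_le_pow_left₀ (abs_nonneg y) hy n
      have h2 : ρ ^ n ≤ 2 * ρ ^ (n+1) := by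
        rw [pow_succ]
        nlinarith [pow_nonneg hρ0 n]
      have hn : ((n+1 : ℕ) : ℝ) = (n : ℝ) + 1 := by push_cast; ring
      rw [norm_mul, norm_mul, norm_pow, Real.norm_eq_abs, Real.norm_eq_abs, Real.norm_eq_abs]
      simp only [Nat.add_sub_cancel, hn, abs_of_nonneg (by positivity : (0:ℝ) ≤ (n:ℝ) + 1)]
      calc |c (n+1)| * (((n:ℝ) + 1) * |y| ^ n)
          ≤ ((m + (n+1)).choose m : ℝ) * (((n:ℝ) + 1) * (2 * ρ ^ (n+1))) := by
            gcongr
            · exact habs _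
            · exact hyρ.trans h2
        _ ≤ 2 * (((n:ℝ) + 1 + 1) * ((m + (n+1)).choose m : ℝ) * ρ ^ (n+1)) := by
            nlinarith [pow_nonneg hρ0 (n+1), Nat.cast_nonneg (α := ℝ) ((m + (n+1)).choose m)]
  -- derivative of the sum
  have hderiv : ∀ y : ℝ, |y| < 1 →
      HasDerivAt (fun z => ∑' k, c k * z ^ k) (∑' k, c k * ((k:ℝ) * y ^ (k-1))) y := by
    intro y hy
    set ρ : ℝ := (|y| + 1) / 2 with hρdef
    have hρ1 : ρ < 1 := by rw [hρdef]; linarith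
    have hρh : 1/2 ≤ ρ := by rw [hρdef]; linarith [abs_nonneg y]
    have hyρ : |y| < ρ := by rw [hρdef]; linarith
    refine hasDerivAt_tsum_of_isPreconnected
      (u := fun k : ℕ => 2 * (((k : ℝ) + 1) * ((m + k).choose m : ℝ) * ρ ^ k))
      (t := Metric.ball (0:ℝ) ρ) (y₀ := (0:ℝ))
      ((summable_master m (by linarith) hρ1).mul_left 2)
      Metric.isOpen_ball (convex_ball (0:ℝ) ρ).isPreconnected
      (fun n z _ => HasDerivAt.const_mul (c n) (hasDerivAt_pow n z))
      (fun n z hz => hbound ρ hρh z (le_of_lt (by simpa [Real.norm_eq_abs] using hz)) n)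
      (Metric.mem_ball_self (by linarith : (0:ℝ) < ρ))
      (hsum 0 (by simp))
      (by simpa [Real.norm_eq_abs] using hyρ)
  -- functional equation
  have hkey : ∀ y : ℝ, |y| < 1 →
      (1 + y) * (∑' k, c k * ((k:ℝ) * y ^ (k-1))) = r * ∑' k, c k * y ^ k := by
    intro y hy
    set ρ : ℝ := (|y| + 1) / 2 with hρdef
    have hρ1 : ρ < 1 := by rw [hρdef]; linarith
    have hρh : 1/2 ≤ ρ := by rw [hρdef]; linarith [abs_nonneg y]
    have hyρ : |y| ≤ ρ := by rw [hρdef]; linarith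
    have hSD : Summable (fun k : ℕ => c k * ((k:ℝ) * y ^ (k-1))) := by
      refine Summable.of_norm_bounded
        ((summable_master m (by linarith) hρ1).mul_left 2) (fun k => hbound ρ hρh y hyρ k)
    have hS : Summable (fun k : ℕ => c k * y ^ k) := hsum y hy
    have hxb : ∀ k : ℕ, y * (c k * ((k:ℝ) * y ^ (k-1))) = c k * ((k:ℝ) * y ^ k) := by
      intro k
      match k with
      | 0 => simp
      | n+1 =>
        simp only [Nat.add_sub_cancel]
        rw [pow_succ]
        push_cast
        ring
    have hshift : ∀ k : ℕ, c (k+1) * (((k+1:ℕ):ℝ) * y ^ ((k+1) - 1)) =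
        r * (c k * y ^ k) - y * (c k * ((k:ℝ) * y ^ (k-1))) := by
      intro k
      rw [hxb k]
      simp only [Nat.add_sub_cancel]
      have hratio := genBinom_ratio r k
      push_cast
      have : c (k+1) * (((k:ℝ)+1) * y ^ k) = (((k:ℝ)+1) * genBinom r (k+1)) * y ^ k := by
        rw [hc]; ring
      rw [this, hratio, hc]
      ring
    have hDval : (∑' k, c k * ((k:ℝ) * y ^ (k-1))) =
        r * (∑' k, c k * y ^ k) - y * (∑' k, c k * ((k:ℝ) * y ^ (k-1))) := by
      calc (∑' k, c k * ((k:ℝ) * y ^ (k-1)))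
          = c 0 * ((0:ℝ) * y ^ (0-1)) + ∑' k, c (k+1) * (((k+1:ℕ):ℝ) * y ^ ((k+1) - 1)) := by
            rw [Summable.tsum_eq_zero_add hSD]
            push_cast
            ring_nf
        _ = ∑' k, c (k+1) * (((k+1:ℕ):ℝ) * y ^ ((k+1) - 1)) := by simp
        _ = ∑' k, (r * (c k * y ^ k) - y * (c k * ((k:ℝ) * y ^ (k-1)))) := tsum_congr hshift
        _ = (∑' k, r * (c k * y ^ k)) - ∑' k, y * (c k * ((k:ℝ) * y ^ (k-1))) :=
            Summable.tsum_sub (hS.mul_left r) (hSD.mul_left y)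
        _ = r * (∑' k, c k * y ^ k) - y * (∑' k, c k * ((k:ℝ) * y ^ (k-1))) := by
            rw [tsum_mul_left, tsum_mul_left]
    linear_combination hDval
  -- the quotient is constant
  set F : ℝ → ℝ := fun z => ∑' k, c k * z ^ k with hF
  have hφ : ∀ y ∈ Set.Ioo (-1:ℝ) 1, HasDerivAt (fun z => F z * (1+z) ^ (-r)) 0 y := by
    intro y hy
    have hy' : |y| < 1 := abs_lt.2 ⟨hy.1, hy.2⟩
    have hpos : (0:ℝ) < 1 + y := by linarith [hy.1]
    have h1 := hderiv y hy'
    have h2 : HasDerivAt (fun z : ℝ => (1+z) ^ (-r)) (-r * (1+y) ^ (-r-1)) y := by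
      have h3 : HasDerivAt (fun z : ℝ => 1 + z) 1 y := (hasDerivAt_id y).const_add 1
      have h4 := Real.hasDerivAt_rpow_const (x := 1+y) (p := -r) (Or.inl hpos.ne')
      have := h4.comp y h3
      rw [neg_mul]; simp at this; exact this
    have h5 := h1.mul h2
    have hpow : (1+y) ^ (-r) = (1+y) * (1+y) ^ (-r-1) := by
      have h6 := Real.rpow_add hpos 1 (-r-1)
      rw [Real.rpow_one] at h6
      have e : (1:ℝ) + (-r-1) = -r := by ring
      rw [e] at h6
      exact h6
    have hkey' := hkey y hy'
    refine h5.congr_deriv ?_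
    rw [hpow]
    linear_combination ((1+y) ^ (-r-1)) * hkey'
  have hF0 : F 0 = 1 := by
    have h8 : F 0 = ∑' k : ℕ, c k * (0:ℝ) ^ k := rfl
    rw [h8]
    have h7 : ∀ k : ℕ, k ≠ 0 → c k * (0:ℝ) ^ k = 0 := fun k hk => by
      rw [zero_pow hk, mul_zero]
    rw [tsum_eq_single 0 h7]
    simp [hc, genBinom_zero]

  have hx' := abs_lt.1 hx
  have hmem : x ∈ Set.Ioo (-1:ℝ) 1 := ⟨hx'.1, hx'.2⟩
  have h0mem : (0:ℝ) ∈ Set.Ioo (-1:ℝ) 1 := by norm_num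
  have hconst : F x * (1+x) ^ (-r) = F 0 * (1+(0:ℝ)) ^ (-r) := by
    refine Convex.is_const_of_fderivWithin_eq_zero (convex_Ioo (-1:ℝ) 1)
      (fun z hz => ((hφ z hz).differentiableAt).differentiableWithinAt)
      (fun z hz => ?_) hmem h0mem
    rw [fderivWithin_of_isOpen isOpen_Ioo hz, ((hφ z hz).hasFDerivAt).fderiv]
    ext w
    simp
  have hpos : (0:ℝ) < 1 + x := by linarith [hx'.1]
  have hconst1 : F x * (1+x) ^ (-r) = 1 := by
    rw [hconst, hF0]
    norm_num
  have hFx : F x = (1+x) ^ r := by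
    have h2 : (1+x) ^ (-r) * (1+x) ^ r = 1 := by
      rw [← Real.rpow_add hpos]
      norm_num
    calc F x = F x * ((1+x) ^ (-r) * (1+x) ^ r) := by rw [h2, mul_one]
      _ = (F x * (1+x) ^ (-r)) * (1+x) ^ r := by ring
      _ = (1+x) ^ r := by rw [hconst1, one_mul]
  have hfinal := (hsum x hx).hasSum
  rw [show (∑' k, c k * x ^ k) = (1+x) ^ r from hFx] at hfinal
  exact hfinal

theorem stmt_14 (lam n : ℝ) (hlam : 0 < lam) (a v : ℝ) (hv : 0 < v) (ha : 0 < a)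
    (h : |v ^ lam - a| < v ^ lam) :
    a ^ (n / lam) =
      ∑' k : ℕ, (-1) ^ k * genBinom (n / lam) k * v ^ (n - k * lam) * (v ^ lam - a) ^ k := by
  have hVpos : 0 < v ^ lam := Real.rpow_pos_of_pos hv lam
  set V : ℝ := v ^ lam with hV
  set x : ℝ := (a - V) / V with hxdef
  have hx : |x| < 1 := by
    rw [hxdef, abs_div, abs_of_pos hVpos, div_lt_one hVpos, abs_sub_comm]
    exact h
  have h1x : 1 + x = a / V := by
    rw [hxdef]; field_simp; ring
  have H := (hasSum_one_add_rpow (n / lam) hx).mul_left (v ^ n)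
  have hval : v ^ n * (1 + x) ^ (n / lam) = a ^ (n / lam) := by
    rw [h1x, Real.div_rpow ha.le (le_of_lt hVpos)]
    have hVn : V ^ (n / lam) = v ^ n := by
      rw [hV, ← Real.rpow_mul hv.le]
      congr 1
      field_simp
    rw [hVn]
    have hvn : v ^ n ≠ 0 := (Real.rpow_pos_of_pos hv n).ne'
    field_simp
  rw [hval] at H
  have hterm : ∀ k : ℕ, v ^ n * (genBinom (n / lam) k * x ^ k) =
      (-1) ^ k * genBinom (n / lam) k * v ^ (n - (k : ℝ) * lam) * (V - a) ^ k := by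
    intro k
    have hVk : V ^ k = v ^ ((k : ℝ) * lam) := by
      rw [hV, ← Real.rpow_natCast (v ^ lam) k, ← Real.rpow_mul hv.le]
      congr 1
      ring
    have hsub : v ^ (n - (k : ℝ) * lam) = v ^ n / v ^ ((k : ℝ) * lam) :=
      Real.rpow_sub hv n _
    have hxeq : x = -((V - a) / V) := by rw [hxdef]; ring
    rw [hxeq, neg_pow, div_pow, hsub, ← hVk]
    have hVk0 : V ^ k ≠ 0 := pow_ne_zero k hVpos.ne'
    field_simp
  calc a ^ (n / lam) = ∑' k : ℕ, v ^ n * (genBinom (n / lam) k * x ^ k) := H.tsum_eq.symm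
    _ = ∑' k : ℕ, (-1) ^ k * genBinom (n / lam) k * v ^ (n - (k : ℝ) * lam) * (V - a) ^ k :=
        tsum_congr hterm
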